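/- The lifting map Δ_ϑ : [0,∞) → M given by Δ_ϑ(z) = ϑ_e^z is continuous, where M carries the topology of weak convergence of finite measures; that is, if z_n → z in [0,∞), then ϑ_e^{z_n} converges weakly to ϑ_e^z. -/

import Mathlib

open MeasureTheory Set Filter Topology
open scoped ENNReal NNReal

noncomputable section

/-- The right half-plane `ℍ₊ = [0,∞) × ℝ`, as a subset of `ℝ × ℝ`. -/
def Hplus : Set (ℝ × ℝ) := {p | 0 ≤ p.1}

/-- Translation of a set: `B + w = {b + w : b ∈ B}`. -/
def shiftSet (B : Set (ℝ × ℝ)) (w : ℝ × ℝ) : Set (ℝ × ℝ) := (fun b => b + w) '' B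

lemma shiftSet_eq_preimage (B : Set (ℝ × ℝ)) (w : ℝ × ℝ) :
    shiftSet B w = (fun p => p - w) ⁻¹' B := by
  ext p
  constructor
  · rintro ⟨b, hb, rfl⟩
    simpa [add_sub_cancel_right] using hb
  · intro h
    exact ⟨p - w, h, sub_add_cancel p w⟩

lemma measurableSet_Hplus : MeasurableSet Hplus :=
  measurableSet_le measurable_const measurable_fst

/-- the lifting map `Δ_ϑ : [0,∞) → M`, `z ↦ ϑ_e^z`, is continuous for the
topology of weak convergence of finite measures. -/
theorem stmt_5 (α : ℝ) (hα : 0 < α) (ϑ : Measure (ℝ × ℝ)) [IsProbabilityMeasure ϑ]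
    (hϑsupp : ϑ {p : ℝ × ℝ | p.1 < 0} = 0)
    (hϑ0 : ϑ {p : ℝ × ℝ | p.1 = 0} = 0)
    (hϑmean : ∫⁻ p, ENNReal.ofReal p.1 ∂ϑ = ENNReal.ofReal α⁻¹)
    (τ : ℝ → FiniteMeasure (ℝ × ℝ))
    (hτ0 : (τ 0 : Measure (ℝ × ℝ)) = 0)
    (hτsupp : ∀ z : ℝ, 0 < z → (τ z : Measure (ℝ × ℝ)) {p : ℝ × ℝ | p.1 < 0} = 0)
    (hτ : ∀ z : ℝ, 0 < z → ∀ B : Set (ℝ × ℝ), MeasurableSet B → B ⊆ Hplus →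
      (τ z : Measure (ℝ × ℝ)) B
        = ENNReal.ofReal α * ∫⁻ u in Ioi (0 : ℝ), ϑ (shiftSet B (u / z, u))) :
    ContinuousOn τ (Ici (0 : ℝ)) := by
  have hHm : MeasurableSet Hplus := measurableSet_Hplus
  have hae : ∀ᵐ p ∂ϑ, (0:ℝ) ≤ p.1 := by
    rw [ae_iff]
    convert hϑsupp using 2
    ext p; simp
  have hmap : ∀ z : ℝ, Measurable (fun q : ℝ × (ℝ × ℝ) => q.2 - (q.1 / z, q.1)) := by
    intro z
    exact measurable_snd.sub ((measurable_fst.div_const z).prodMk measurable_fst)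
  -- The measure identity
  have hmeas_eq : ∀ z : ℝ, 0 < z →
      (τ z : Measure (ℝ × ℝ)) =
        (ENNReal.ofReal α) •
          ((((volume.restrict (Ioi (0:ℝ))).prod ϑ).map
            (fun q : ℝ × (ℝ × ℝ) => q.2 - (q.1 / z, q.1))).restrict Hplus) := by
    intro z hz
    ext B hB
    have h2 : (τ z : Measure (ℝ × ℝ)) (B \ Hplus) = 0 := by
      refine measure_mono_null (fun p hp => ?_) (hτsupp z hz)
      simpa [Hplus, not_le] using hp.2
    have h1 : (τ z : Measure (ℝ × ℝ)) B = (τ z : Measure (ℝ × ℝ)) (B ∩ Hplus) := by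
      rw [← measure_inter_add_diff B hHm, h2, add_zero]
    rw [h1, hτ z hz (B ∩ Hplus) (hB.inter hHm) inter_subset_right,
      Measure.smul_apply, Measure.restrict_apply hB, smul_eq_mul,
      Measure.map_apply (hmap z) (hB.inter hHm),
      Measure.prod_apply ((hmap z) (hB.inter hHm))]
    congr 1
    refine lintegral_congr fun u => ?_
    rw [shiftSet_eq_preimage]
    rfl
  -- The lintegral formula
  have hint : ∀ z : ℝ, 0 < z → ∀ g : ℝ × ℝ → ℝ≥0∞, Measurable g →
      ∫⁻ p, g p ∂(τ z : Measure (ℝ × ℝ))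
        = ENNReal.ofReal α *
            ∫⁻ p, (∫⁻ u in Ioi (0:ℝ), Hplus.indicator g (p - (u / z, u))) ∂ϑ := by
    intro z hz g hg
    rw [hmeas_eq z hz, lintegral_smul_measure, ← lintegral_indicator hHm,
      lintegral_map (hg.indicator hHm) (hmap z),
      lintegral_prod_symm (fun q : ℝ × (ℝ × ℝ) => Hplus.indicator g (q.2 - (q.1 / z, q.1)))
        (((hg.indicator hHm).comp (hmap z)).aemeasurable), smul_eq_mul]
  -- Start the continuity proof
  intro z₀ hz₀
  refine FiniteMeasure.tendsto_iff_forall_lintegral_tendsto.mpr ?_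
  intro f
  set fE : ℝ × ℝ → ℝ≥0∞ := fun q => ((f q : ℝ≥0) : ℝ≥0∞) with hfE_def
  set C : ℝ≥0∞ := ((nndist (0 : BoundedContinuousFunction (ℝ × ℝ) ℝ≥0) f : ℝ≥0) : ℝ≥0∞)
    with hC_def
  have hfE_le : ∀ q, fE q ≤ C := fun q =>
    ENNReal.coe_le_coe.mpr (f.apply_le_nndist_zero q)
  have hind_le : ∀ q, Hplus.indicator fE q ≤ C := by
    intro q
    by_cases hq : q ∈ Hplus
    · rw [Set.indicator_of_mem hq]; exact hfE_le q
    · rw [Set.indicator_of_notMem hq]; exact zero_le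
  have hfEmeas : Measurable fE :=
    ENNReal.continuous_coe.comp f.continuous |>.measurable
  have hαα : ENNReal.ofReal α * ENNReal.ofReal α⁻¹ = 1 := by
    rw [← ENNReal.ofReal_mul hα.le, mul_inv_cancel₀ hα.ne', ENNReal.ofReal_one]
  -- pointwise bound on the inner integral
  have hG_le : ∀ z : ℝ, 0 < z → ∀ p : ℝ × ℝ,
      (∫⁻ u in Ioi (0:ℝ), Hplus.indicator fE (p - (u / z, u)))
        ≤ C * ENNReal.ofReal (z * p.1) := by
    intro z hz p
    have hstep : (∫⁻ u in Ioi (0:ℝ), Hplus.indicator fE (p - (u / z, u)))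
        ≤ ∫⁻ u in Ioi (0:ℝ), (Iic (z * p.1)).indicator (fun _ => C) u := by
      refine lintegral_mono fun u => ?_
      by_cases hu : u ≤ z * p.1
      · rw [Set.indicator_of_mem (mem_Iic.mpr hu)]
        exact hind_le _
      · have h1 : p.1 < u / z := (lt_div_iff₀ hz).mpr (by linarith [mul_comm z p.1])
        have h2 : p - (u / z, u) ∉ Hplus := by
          simp only [Hplus, mem_setOf_eq, Prod.fst_sub, not_le]
          linarith
        rw [Set.indicator_of_notMem h2]
        exact zero_le
    refine hstep.trans ?_
    rw [lintegral_indicator measurableSet_Iic, setLIntegral_const,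
      Measure.restrict_apply measurableSet_Iic,
      show Iic (z * p.1) ∩ Ioi 0 = Ioc 0 (z * p.1) by ext u; simp [and_comm],
      Real.volume_Ioc, sub_zero]
  -- global bound on the lintegral
  have hlint_le : ∀ z : ℝ, 0 < z →
      ∫⁻ p, fE p ∂(τ z : Measure (ℝ × ℝ)) ≤ C * ENNReal.ofReal z := by
    intro z hz
    rw [hint z hz fE hfEmeas]
    have : ∫⁻ p, (∫⁻ u in Ioi (0:ℝ), Hplus.indicator fE (p - (u / z, u))) ∂ϑ
        ≤ ∫⁻ p, C * ENNReal.ofReal z * ENNReal.ofReal p.1 ∂ϑ := by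
      refine lintegral_mono fun p => ?_
      refine (hG_le z hz p).trans ?_
      rw [ENNReal.ofReal_mul hz.le, ← mul_assoc]
    refine le_trans (mul_le_mul_right this _) ?_
    rw [lintegral_const_mul _ measurable_fst.ennreal_ofReal, hϑmean,
      show ENNReal.ofReal α * (C * ENNReal.ofReal z * ENNReal.ofReal α⁻¹)
        = C * ENNReal.ofReal z * (ENNReal.ofReal α * ENNReal.ofReal α⁻¹) from by ring,
      hαα, mul_one]
  rcases eq_or_lt_of_le (mem_Ici.mp hz₀) with h0 | hpos
  · -- continuity at 0
    subst h0
    have h0' : ∫⁻ p, fE p ∂(τ 0 : Measure (ℝ × ℝ)) = 0 := by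
      rw [hτ0]; simp
    rw [h0']
    have hCz : Tendsto (fun z : ℝ => C * ENNReal.ofReal z) (𝓝[Ici (0:ℝ)] 0) (𝓝 0) := by
      have h1 : Tendsto (fun z : ℝ => ENNReal.ofReal z) (𝓝[Ici (0:ℝ)] 0)
          (𝓝 (ENNReal.ofReal 0)) :=
        ENNReal.tendsto_ofReal (tendsto_id.mono_left nhdsWithin_le_nhds)
      simpa using ENNReal.Tendsto.const_mul (a := C) h1 (Or.inr ENNReal.coe_ne_top)
    refine tendsto_of_tendsto_of_tendsto_of_le_of_le' tendsto_const_nhds hCz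
      (Eventually.of_forall fun z => zero_le) ?_
    filter_upwards [self_mem_nhdsWithin] with z hz
    rcases eq_or_lt_of_le (mem_Ici.mp hz) with hz' | hz'
    · rw [← hz', h0']
      exact zero_le
    · exact hlint_le z hz'
  · -- continuity at z₀ > 0
    refine Tendsto.mono_left ?_ nhdsWithin_le_nhds
    have hev : ∀ᶠ z in 𝓝 z₀, 0 < z ∧ z < z₀ + 1 := by
      have h1 : ∀ᶠ z in 𝓝 z₀, 0 < z := isOpen_Ioi.eventually_mem (by exact hpos)
      have h2 : ∀ᶠ z in 𝓝 z₀, z < z₀ + 1 :=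
        eventually_lt_nhds (by linarith)
      exact h1.and h2
    rw [hint z₀ hpos fE hfEmeas]
    have hmain : Tendsto
        (fun z : ℝ => ∫⁻ p, (∫⁻ u in Ioi (0:ℝ), Hplus.indicator fE (p - (u / z, u))) ∂ϑ)
        (𝓝 z₀)
        (𝓝 (∫⁻ p, (∫⁻ u in Ioi (0:ℝ), Hplus.indicator fE (p - (u / z₀, u))) ∂ϑ)) := by
      refine tendsto_lintegral_filter_of_dominated_convergence
        (fun p => C * ENNReal.ofReal (z₀ + 1) * ENNReal.ofReal p.1) ?_ ?_ ?_ ?_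
      · refine Eventually.of_forall fun z => ?_
        exact Measurable.lintegral_prod_right'
          ((hfEmeas.indicator hHm).comp
            (measurable_fst.sub ((measurable_snd.div_const z).prodMk measurable_snd)))
      · filter_upwards [hev] with z hz
        filter_upwards [hae] with p hp
        refine (hG_le z hz.1 p).trans ?_
        rw [ENNReal.ofReal_mul hz.1.le, ← mul_assoc]
        gcongr
        exact hz.2.le
      · rw [lintegral_const_mul _ measurable_fst.ennreal_ofReal, hϑmean]
        exact ENNReal.mul_ne_top
          (ENNReal.mul_ne_top ENNReal.coe_ne_top ENNReal.ofReal_ne_top) ENNReal.ofReal_ne_top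
      · -- a.e. pointwise convergence of the inner integrals
        filter_upwards [hae] with p hp
        -- inner dominated convergence
        refine tendsto_lintegral_filter_of_dominated_convergence
          ((Iic ((z₀ + 1) * p.1)).indicator fun _ => C) ?_ ?_ ?_ ?_
        · refine Eventually.of_forall fun z => ?_
          exact (hfEmeas.indicator hHm).comp
            (measurable_const.sub ((measurable_id.div_const z).prodMk measurable_id))
        · filter_upwards [hev] with z hz
          refine Eventually.of_forall fun u => ?_
          by_cases hu : u ≤ (z₀ + 1) * p.1
          · rw [Set.indicator_of_mem (mem_Iic.mpr hu)]
            exact hind_le _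
          · have h1 : z * p.1 < u := by
              refine lt_of_le_of_lt ?_ (not_le.1 hu)
              nlinarith [hz.1.le, hz.2.le]
            have h2 : p.1 < u / z := (lt_div_iff₀ hz.1).mpr (by linarith [mul_comm z p.1])
            have h3 : p - (u / z, u) ∉ Hplus := by
              simp only [Hplus, mem_setOf_eq, Prod.fst_sub, not_le]
              linarith
            rw [Set.indicator_of_notMem h3]
            exact zero_le
        · rw [lintegral_indicator measurableSet_Iic, setLIntegral_const,
            Measure.restrict_apply measurableSet_Iic,
            show Iic ((z₀ + 1) * p.1) ∩ Ioi 0 = Ioc 0 ((z₀ + 1) * p.1) by ext u; simp [and_comm],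
            Real.volume_Ioc]
          exact ENNReal.mul_ne_top ENNReal.coe_ne_top ENNReal.ofReal_ne_top
        · -- a.e. u convergence
          have hsing : ∀ᵐ u ∂(volume.restrict (Ioi (0:ℝ))), u ≠ z₀ * p.1 := by
            have h1 : {u : ℝ | ¬ u ≠ z₀ * p.1} = {z₀ * p.1} := by ext u; simp
            rw [ae_iff, h1]
            exact le_antisymm
              ((Measure.restrict_apply_le _ _).trans_eq (measure_singleton _)) (zero_le)
          filter_upwards [hsing] with u hu
          have hdiv : Tendsto (fun z : ℝ => u / z) (𝓝 z₀) (𝓝 (u / z₀)) :=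
            tendsto_const_nhds.div tendsto_id hpos.ne'
          rcases lt_trichotomy (u / z₀) p.1 with hlt | heq | hgt
          · -- eventually inside Hplus
            have hev3 : ∀ᶠ z in 𝓝 z₀, u / z < p.1 := hdiv.eventually_lt_const hlt
            have hmemz : ∀ᶠ z in 𝓝 z₀,
                Hplus.indicator fE (p - (u / z, u)) = fE (p - (u / z, u)) := by
              filter_upwards [hev3] with z hz
              refine Set.indicator_of_mem ?_ _
              simp only [Hplus, mem_setOf_eq, Prod.fst_sub]
              linarith
            have hcont : Tendsto (fun z : ℝ => fE (p - (u / z, u))) (𝓝 z₀)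
                (𝓝 (fE (p - (u / z₀, u)))) := by
              have hT : Tendsto (fun z : ℝ => p - (u / z, u)) (𝓝 z₀)
                  (𝓝 (p - (u / z₀, u))) :=
                tendsto_const_nhds.sub (hdiv.prodMk_nhds tendsto_const_nhds)
              exact ((ENNReal.continuous_coe.comp f.continuous).continuousAt.tendsto).comp hT
            rw [Set.indicator_of_mem (by
              simp only [Hplus, mem_setOf_eq, Prod.fst_sub]; linarith)]
            exact Tendsto.congr' (hmemz.mono fun z hz => hz.symm) hcont
          · exact absurd (by field_simp at heq; linarith [heq, mul_comm z₀ p.1] : u = z₀ * p.1) hu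
          · have hev3 : ∀ᶠ z in 𝓝 z₀, p.1 < u / z := hdiv.eventually_const_lt hgt
            have hmemz : ∀ᶠ z in 𝓝 z₀,
                Hplus.indicator fE (p - (u / z, u)) = 0 := by
              filter_upwards [hev3] with z hz
              refine Set.indicator_of_notMem ?_ _
              simp only [Hplus, mem_setOf_eq, Prod.fst_sub, not_le]
              linarith
            rw [Set.indicator_of_notMem (by
              simp only [Hplus, mem_setOf_eq, Prod.fst_sub, not_le]; linarith)]
            exact Tendsto.congr' (hmemz.mono fun z hz => hz.symm) tendsto_const_nhds
    refine Tendsto.congr' ?_ (ENNReal.Tendsto.const_mul hmain (Or.inr ENNReal.ofReal_ne_top))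
    filter_upwards [hev] with z hz
    exact (hint z hz.1 fE hfEmeas).symm
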